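/- Let R be a commutative ring and a, b, c, d, x, y, z, t ∈ R. Let I_W be the ideal generated by g₁ = ax+by, g₂ = az+bt+cx+dy, g₃ = cz+dt, and set Δ₁ = ad−bc, Δ₂ = xt−yz. Then each of the following six products lies in I_W: Δ₁·(dx−bz), Δ₁·(at−cy), Δ₂·(dx−bz), Δ₂·(at−cy), Δ₁·((dy−bt)+(az−cx)), and Δ₂·((dy−bt)+(az−cx)). (The products of the spinor minors Δ₁, Δ₂ with the nonspinor minors dx−bz, at−cy, and with (dy−bt)+(az−cx), all belong to the isotropy ideal I_W.) -/
import Mathlib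

/-- In a commutative ring `R`, for the isotropy ideal
`I_W = (ax+by, az+bt+cx+dy, cz+dt)` of the `2×4` matrix `[[a,b,x,y],[c,d,z,t]]`,
the products of the spinor minors `Δ₁ = ad−bc`, `Δ₂ = xt−yz` with the nonspinor
minors `dx−bz`, `at−cy` and with `(dy−bt)+(az−cx)` all lie in `I_W`. -/
theorem spinor_times_nonspinor_in_isotropy_ideal (R : Type*) [CommRing R]
    (a b c d x y z t : R) :
    (a*d - b*c) * (d*x - b*z) ∈ Ideal.span {a*x + b*y, a*z + b*t + c*x + d*y, c*z + d*t} ∧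
    (a*d - b*c) * (a*t - c*y) ∈ Ideal.span {a*x + b*y, a*z + b*t + c*x + d*y, c*z + d*t} ∧
    (x*t - y*z) * (d*x - b*z) ∈ Ideal.span {a*x + b*y, a*z + b*t + c*x + d*y, c*z + d*t} ∧
    (x*t - y*z) * (a*t - c*y) ∈ Ideal.span {a*x + b*y, a*z + b*t + c*x + d*y, c*z + d*t} ∧
    (a*d - b*c) * ((d*y - b*t) + (a*z - c*x)) ∈
      Ideal.span {a*x + b*y, a*z + b*t + c*x + d*y, c*z + d*t} ∧
    (x*t - y*z) * ((d*y - b*t) + (a*z - c*x)) ∈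
      Ideal.span {a*x + b*y, a*z + b*t + c*x + d*y, c*z + d*t} := by
  set S : Set R := {a*x + b*y, a*z + b*t + c*x + d*y, c*z + d*t} with hS
  have h1 : (a*x + b*y) ∈ Ideal.span S := Ideal.subset_span (by simp [hS])
  have h2 : (a*z + b*t + c*x + d*y) ∈ Ideal.span S := Ideal.subset_span (by simp [hS])
  have h3 : (c*z + d*t) ∈ Ideal.span S := Ideal.subset_span (by simp [hS])
  have combo : ∀ c1 c2 c3 : R,
      c1 * (a*x + b*y) + c2 * (a*z + b*t + c*x + d*y) + c3 * (c*z + d*t) ∈ Ideal.span S :=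
    fun c1 c2 c3 => Ideal.add_mem _ (Ideal.add_mem _ (Ideal.mul_mem_left _ _ h1)
      (Ideal.mul_mem_left _ _ h2)) (Ideal.mul_mem_left _ _ h3)
  refine ⟨?_, ?_, ?_, ?_, ?_, ?_⟩
  · have := combo (d*d) (-(b*d)) (b*b); convert this using 1; ring
  · have := combo (c*c) (-(a*c)) (a*a); convert this using 1; ring
  · have := combo (z*z) (-(x*z)) (x*x); convert this using 1; ring
  · have := combo (t*t) (-(y*t)) (y*y); convert this using 1; ring
  · have := combo (-(2*(c*d))) (a*d + b*c) (-(2*(a*b))); convert this using 1; ring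
  · have := combo (2*(z*t)) (-(x*t + y*z)) (2*(x*y)); convert this using 1; ring
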